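/- The number of permutations of {1,…,n} avoiding the barred pattern 3-1̄-42 equals the n-th Bell number: |S_n(3-1̄-42)| = B_n, where B_n is the number of set partitions of an n-element set. -/

import Mathlib

/-- One step of Patience Sorting: place card `c` on the leftmost pile whose top
(head) is larger than `c`, or start a new pile on the right.  Piles are stored
top-first, so each pile is an increasing list whose head is the top (smallest) card. -/
def PSinsert (c : ℕ) : List (List ℕ) → List (List ℕ)
  | [] => [[c]]
  | [] :: ps => [] :: PSinsert c ps
  | (x :: p) :: ps =>
      if c < x then (c :: x :: p) :: ps else (x :: p) :: PSinsert c ps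

/-- The pile configuration `R(w)` produced by Patience Sorting applied to the word `w`. -/
def PSpiles (w : List ℕ) : List (List ℕ) :=
  w.foldl (fun ps c => PSinsert c ps) []

/-- The one-line word (with values `1,…,n`) of a permutation of `Fin n`. -/
def permWord {n : ℕ} (σ : Equiv.Perm (Fin n)) : List ℕ :=
  List.ofFn fun i => (σ i : ℕ) + 1

/-- `AvoidsBarred σ`: the permutation avoids the barred pattern 3-1̄-42, i.e., every
occurrence of 2-31 (0-based positions `i < j` with `w(j+1) < w(i) < w(j)`, where `w` is
the one-line word of `σ`) is contained in an occurrence of 3-1-42 (there is `k` with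
`i < k < j` and `w(k) < w(j+1)`). -/
def AvoidsBarred {n : ℕ} (σ : Equiv.Perm (Fin n)) : Prop :=
  ∀ i j : ℕ, i < j → j + 1 < n →
    (permWord σ).getD (j + 1) 0 < (permWord σ).getD i 0 →
    (permWord σ).getD i 0 < (permWord σ).getD j 0 →
    ∃ k, i < k ∧ k < j ∧ (permWord σ).getD k 0 < (permWord σ).getD (j + 1) 0

namespace Stmt15Aux
open List

variable {α : Type*} [LinearOrder α] {β : Type*} [LinearOrder β]

/-- index-form of the ascent condition, on ℕ-lists, matching `AvoidsBarred`'s getD style. -/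
def Cidx (w : List ℕ) : Prop :=
  ∀ i k : ℕ, i < k → k < w.length → i + 1 < w.length →
    w.getD i 0 < w.getD (i+1) 0 → w.getD i 0 < w.getD k 0

/-- recursive form: at each ascent, the bottom is below everything later. -/
def Cw : List α → Prop
  | [] => True
  | a :: t => Cw t ∧ ∀ b, t.head? = some b → a < b → ∀ x ∈ t, a < x

def GoodRel (r s : List α) : Prop := ∀ y ∈ s, ∃ x ∈ r, x < y

def Good (L : List (List α)) : Prop :=
  (∀ r ∈ L, r ≠ []) ∧ (∀ r ∈ L, r.Chain' (· > ·)) ∧ L.Pairwise GoodRel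

def runs : List α → List (List α)
  | [] => []
  | a :: t =>
    match runs t with
    | [] => [[a]]
    | [] :: _ => [[a]]
    | (b :: r) :: rs => if b < a then (a :: b :: r) :: rs else [a] :: (b :: r) :: rs

theorem runs_spec (w : List α) :
    (∀ r ∈ runs w, r ≠ []) ∧ (runs w).flatten = w ∧ (∀ r ∈ runs w, r.Chain' (· > ·)) := by
  induction w with
  | nil => simp [runs]
  | cons a t ih =>
    obtain ⟨hne, hfl, hch⟩ := ih
    cases h : runs t with
    | nil =>
      have ht : t = [] := by rw [← hfl, h]; rfl
      subst ht
      simp [runs, h, Chain']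
    | cons r rs =>
      cases r with
      | nil => exact absurd rfl (hne [] (h ▸ mem_cons_self))
      | cons b r' =>
        by_cases hba : b < a
        · have hruns : runs (a :: t) = (a :: b :: r') :: rs := by
            simp [runs, h, hba]
          rw [hruns]
          refine ⟨?_, ?_, ?_⟩
          · intro r hr
            rcases mem_cons.1 hr with rfl | hr
            · simp
            · exact hne _ (h ▸ mem_cons_of_mem _ hr)
          · have := hfl
            rw [h] at this
            simp only [flatten_cons] at this ⊢
            rw [← this]; rfl
          · intro r hr
            rcases mem_cons.1 hr with rfl | hr
            · exact (isChain_cons_cons.2 ⟨hba, hch _ (h ▸ mem_cons_self)⟩)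
            · exact hch _ (h ▸ mem_cons_of_mem _ hr)
        · have hruns : runs (a :: t) = [a] :: (b :: r') :: rs := by
            simp [runs, h, hba]
          rw [hruns]
          refine ⟨?_, ?_, ?_⟩
          · intro r hr
            rcases mem_cons.1 hr with rfl | hr
            · simp
            · exact hne _ (h ▸ hr)
          · have := hfl
            rw [h] at this
            simp only [flatten_cons] at this ⊢
            rw [← this]; rfl
          · intro r hr
            rcases mem_cons.1 hr with rfl | hr
            · simp [Chain']
            · exact hch _ (h ▸ hr)

theorem runs_flatten (w : List α) : (runs w).flatten = w := (runs_spec w).2.1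

theorem good_nil : Good ([] : List (List α)) := ⟨by simp, by simp, Pairwise.nil⟩

theorem good_tail {r : List α} {L : List (List α)} (h : Good (r :: L)) : Good L :=
  ⟨fun s hs => h.1 s (mem_cons_of_mem _ hs), fun s hs => h.2.1 s (mem_cons_of_mem _ hs),
    (pairwise_cons.1 h.2.2).2⟩

theorem good_runs {w : List α} (hC : Cw w) (hnd : w.Nodup) : Good (runs w) := by
  induction w with
  | nil => simpa [runs] using good_nil
  | cons a t ih =>
    have hCt : Cw t := hC.1
    have hgt : Good (runs t) := ih hCt (nodup_cons.1 hnd).2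
    obtain ⟨hne, hfl, hch⟩ := runs_spec t
    cases h : runs t with
    | nil =>
      have hruns : runs (a :: t) = [[a]] := by simp [runs, h]
      rw [hruns]
      exact ⟨by simp, by simp [Chain'], pairwise_singleton _ _⟩
    | cons r rs =>
      cases r with
      | nil => exact absurd rfl (hne [] (h ▸ mem_cons_self))
      | cons b r' =>
        have htb : t = b :: (r' ++ rs.flatten) := by
          rw [← hfl, h]; rfl
        rw [h] at hgt
        by_cases hba : b < a
        · have hruns : runs (a :: t) = (a :: b :: r') :: rs := by simp [runs, h, hba]
          rw [hruns]
          refine ⟨?_, ?_, ?_⟩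
          · intro s hs
            rcases mem_cons.1 hs with rfl | hs
            · simp
            · exact hgt.1 _ (mem_cons_of_mem _ hs)
          · intro s hs
            rcases mem_cons.1 hs with rfl | hs
            · exact isChain_cons_cons.2 ⟨hba, hgt.2.1 _ (mem_cons_self)⟩
            · exact hgt.2.1 _ (mem_cons_of_mem _ hs)
          · refine pairwise_cons.2 ⟨?_, (pairwise_cons.1 hgt.2.2).2⟩
            intro s hs y hy
            obtain ⟨x, hx, hxy⟩ := (pairwise_cons.1 hgt.2.2).1 s hs y hy
            exact ⟨x, mem_cons_of_mem _ hx, hxy⟩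
        · -- a < b by nodup
          have hab : a < b := by
            have hne' : a ≠ b := by
              intro hEq
              exact (nodup_cons.1 hnd).1 (by rw [hEq, htb]; exact mem_cons_self)
            exact lt_of_le_of_ne (not_lt.1 hba) hne'
          have hbelow : ∀ x ∈ t, a < x := by
            refine hC.2 b ?_ hab
            rw [htb]; rfl
          have hruns : runs (a :: t) = [a] :: (b :: r') :: rs := by simp [runs, h, hba]
          rw [hruns]
          refine ⟨?_, ?_, ?_⟩
          · intro s hs
            rcases mem_cons.1 hs with rfl | hs
            · simp
            · exact hgt.1 _ hs
          · intro s hs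
            rcases mem_cons.1 hs with rfl | hs
            · simp [Chain']
            · exact hgt.2.1 _ hs
          · refine pairwise_cons.2 ⟨?_, hgt.2.2⟩
            intro s hs y hy
            refine ⟨a, mem_cons_self, hbelow y ?_⟩
            rw [← hfl, h]
            exact mem_flatten.2 ⟨s, hs, hy⟩

theorem getLast_le_of_chain {r : List α} (hch : r.Chain' (· > ·)) (hr : r ≠ []) :
    ∀ x ∈ r, r.getLast hr ≤ x := by
  induction r with
  | nil => exact absurd rfl hr
  | cons b r' ih =>
    intro x hx
    cases r' with
    | nil =>
      simp only [mem_singleton] at hx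
      simp [hx]
    | cons c r'' =>
      have hch' : (c :: r'').Chain' (· > ·) := (isChain_cons_cons.1 hch).2
      have hbc : c < b := (isChain_cons_cons.1 hch).1
      rw [getLast_cons (by simp)]
      rcases mem_cons.1 hx with rfl | hx
      · exact le_of_lt (lt_of_le_of_lt (ih hch' (by simp) c (mem_cons_self)) hbc)
      · exact ih hch' (by simp) x hx

theorem cw_nil : Cw ([] : List α) := trivial

theorem cw_append_block {r u : List α} (hch : r.Chain' (· > ·)) (hu : Cw u)
    (hlt : ∀ y ∈ u, ∀ h : r ≠ [], r.getLast h < y) : Cw (r ++ u) := by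
  induction r with
  | nil => simpa using hu
  | cons b r' ih =>
    cases r' with
    | nil =>
      refine ⟨by simpa using hu, ?_⟩
      intro c hc _ x hx
      have : b < x := by
        have := hlt x (by simpa using hx) (by simp)
        simpa using this
      exact this
    | cons c r'' =>
      have hch' : (c :: r'').Chain' (· > ·) := (isChain_cons_cons.1 hch).2
      have hbc : c < b := (isChain_cons_cons.1 hch).1
      refine ⟨?_, ?_⟩
      · refine ih hch' ?_
        intro y hy h
        have := hlt y hy (by simp)
        rwa [getLast_cons (by simp)] at this
      · intro d hd hbd x hx
        exfalso
        have hdc : d = c := by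
          have : c = d := by simpa using hd
          exact this.symm
        rw [hdc] at hbd
        exact absurd hbd (not_lt.2 (le_of_lt hbc))

theorem cw_flatten {L : List (List α)} (hG : Good L) : Cw L.flatten := by
  induction L with
  | nil => exact cw_nil
  | cons r L' ih =>
    have hG' : Good L' := good_tail hG
    rw [flatten_cons]
    refine cw_append_block (hG.2.1 r (mem_cons_self)) (ih hG') ?_
    intro y hy h
    obtain ⟨s, hs, hys⟩ := mem_flatten.1 hy
    obtain ⟨x, hx, hxy⟩ := (pairwise_cons.1 hG.2.2).1 s hs y hys
    exact lt_of_le_of_lt (getLast_le_of_chain (hG.2.1 r (mem_cons_self)) h x hx) hxy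
theorem aux_prefix {r1 r2 : List α} {t1 t2 : List (List α)}
    (h1 : Good (r1 :: t1)) (h2 : Good (r2 :: t2))
    (heq : r1 ++ t1.flatten = r2 ++ t2.flatten) (hlen : r1.length ≤ r2.length) :
    r1 = r2 := by
  have hpre1 : r1 <+: r1 ++ t1.flatten := prefix_append _ _
  have hpre2 : r2 <+: r1 ++ t1.flatten := heq ▸ prefix_append _ _
  obtain ⟨d, hd⟩ := prefix_of_prefix_length_le hpre1 hpre2 hlen
  cases d with
  | nil => rw [← hd]; simp
  | cons y d' =>
    exfalso
    rw [← hd] at heq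
    have hflat : t1.flatten = (y :: d') ++ t2.flatten := by
      rw [append_assoc] at heq
      exact append_cancel_left heq
    have hy : y ∈ t1.flatten := by rw [hflat]; simp
    obtain ⟨s, hs, hys⟩ := mem_flatten.1 hy
    obtain ⟨x, hx, hxy⟩ := (pairwise_cons.1 h1.2.2).1 s hs y hys
    -- x ∈ r1; but r2 = r1 ++ y :: d' is strictly decreasing, so x > y
    have hch2 : r2.Chain' (· > ·) := h2.2.1 r2 (mem_cons_self)
    have hpw : r2.Pairwise (· > ·) := isChain_iff_pairwise.1 hch2
    rw [← hd] at hpw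
    have : x > y := (pairwise_append.1 hpw).2.2 x hx y (mem_cons_self)
    exact absurd hxy (not_lt.2 (le_of_lt this))

theorem good_flatten_inj {L1 L2 : List (List α)} (h1 : Good L1) (h2 : Good L2)
    (heq : L1.flatten = L2.flatten) : L1 = L2 := by
  induction L1 generalizing L2 with
  | nil =>
    cases L2 with
    | nil => rfl
    | cons r2 t2 =>
      exfalso
      have : r2 ≠ [] := h2.1 r2 (mem_cons_self)
      cases r2 with
      | nil => exact this rfl
      | cons b r' => simp at heq
  | cons r1 t1 ih =>
    cases L2 with
    | nil =>
      exfalso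
      have : r1 ≠ [] := h1.1 r1 (mem_cons_self)
      cases r1 with
      | nil => exact this rfl
      | cons b r' => simp at heq
    | cons r2 t2 =>
      simp only [flatten_cons] at heq
      have hr : r1 = r2 := by
        rcases le_total r1.length r2.length with hl | hl
        · exact aux_prefix h1 h2 heq hl
        · exact (aux_prefix h2 h1 heq.symm hl).symm
      subst hr
      have : t1.flatten = t2.flatten := append_cancel_left heq
      rw [ih (good_tail h1) (good_tail h2) this]
theorem cidx_tail {a : ℕ} {t : List ℕ} (h : Cidx (a :: t)) : Cidx t := by
  intro i k hik hk hi1 hasc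
  have := h (i+1) (k+1) (by omega) (by simpa using Nat.succ_lt_succ hk)
    (by simpa using Nat.succ_lt_succ hi1) (by simpa using hasc)
  simpa using this

theorem cw_iff_cidx (w : List ℕ) : Cw w ↔ Cidx w := by
  induction w with
  | nil => simp [Cw, Cidx]
  | cons a t ih =>
    constructor
    · rintro ⟨hCt, hhead⟩
      intro i k hik hk hi1
      cases i with
      | zero =>
        intro hasc
        have htne : t ≠ [] := by
          intro h; subst h; simp at hi1
        have hhd : t.head? = some (t.getD 0 0) := by
          cases t with
          | nil => exact absurd rfl htne
          | cons c t' => rfl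
        simp only [getD_cons_zero, getD_cons_succ] at hasc
        have hbelow := hhead _ hhd (by simpa using hasc)
        obtain ⟨k', rfl⟩ : ∃ k', k = k' + 1 := ⟨k - 1, by omega⟩
        simp only [getD_cons_zero, getD_cons_succ]
        have hk' : k' < t.length := by simpa using hk
        have hmem : t.getD k' 0 ∈ t := by
          rw [List.getD_eq_getElem t 0 hk']
          exact List.getElem_mem _
        exact hbelow _ hmem
      | succ i' =>
        intro hasc
        obtain ⟨k', rfl⟩ : ∃ k', k = k' + 1 := ⟨k - 1, by omega⟩
        simp only [getD_cons_succ] at hasc ⊢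
        exact (ih.1 hCt) i' k' (by omega) (by simpa using hk) (by simpa using hi1) hasc
    · intro h
      refine ⟨ih.2 (cidx_tail h), ?_⟩
      intro b hb hab x hx
      obtain ⟨⟨m, hm⟩, hget⟩ := mem_iff_get.1 hx
      have htlen : 0 < t.length := by
        cases t with | nil => simp at hb | cons c t' => simp
      have hb0 : t.getD 0 0 = b := by
        cases t with
        | nil => simp at hb
        | cons c t' => simpa using hb
      have h1 : (a :: t).getD 1 0 = b := by simpa using hb0
      have h0 : (a :: t).getD 0 0 = a := rfl
      have hx' : (a :: t).getD (m+1) 0 = x := by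
        have hgd : t.getD m 0 = x := by
          rw [List.getD_eq_getElem t 0 hm]
          simpa [List.get_eq_getElem] using hget
        simpa using hgd
      have hfin := h 0 (m+1) (by omega) (by simpa using Nat.succ_lt_succ hm)
        (by simpa using Nat.succ_lt_succ htlen) (by rw [h0, h1]; exact hab)
      rw [h0, hx'] at hfin
      exact hfin

theorem cw_map {f : α → β} (hf : StrictMono f) (w : List α) : Cw (w.map f) ↔ Cw w := by
  induction w with
  | nil => simp [Cw]
  | cons a t ih =>
    constructor
    · rintro ⟨h1, h2⟩
      refine ⟨ih.1 h1, ?_⟩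
      intro b hb hab x hx
      have : f a < f x := by
        refine h2 (f b) ?_ (hf hab) (f x) (mem_map_of_mem (f := f) hx)
        rw [head?_map, hb]; rfl
      exact hf.lt_iff_lt.1 this
    · rintro ⟨h1, h2⟩
      refine ⟨ih.2 h1, ?_⟩
      intro b' hb' hab' y hy
      obtain ⟨x, hx, rfl⟩ := mem_map.1 hy
      rw [head?_map] at hb'
      cases ht : t.head? with
      | none => rw [ht] at hb'; simp at hb'
      | some b =>
        rw [ht] at hb'
        simp only [Option.map_some, Option.some.injEq] at hb'
        subst hb'
        exact hf (h2 b ht (hf.lt_iff_lt.1 hab') x hx)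

theorem exists_ascent (w : List ℕ) {i j : ℕ} (hij : i < j) (hj : j < w.length)
    (hlt : w.getD i 0 < w.getD j 0) :
    ∃ m, i ≤ m ∧ m < j ∧ w.getD m 0 < w.getD (m+1) 0 := by
  induction j with
  | zero => omega
  | succ j' ihj =>
    rcases Nat.lt_or_ge i j' with hij' | hij'
    · rcases Nat.lt_or_ge (w.getD j' 0) (w.getD (j'+1) 0) with h | h
      · exact ⟨j', by omega, by omega, h⟩
      · obtain ⟨m, hm1, hm2, hm3⟩ := ihj hij' (by omega) (lt_of_lt_of_le hlt h)
        exact ⟨m, hm1, by omega, hm3⟩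
    · have : i = j' := by omega
      subst this
      exact ⟨i, le_refl _, by omega, hlt⟩

theorem cidx_of_barred (w : List ℕ)
    (hinj : ∀ i j, i < w.length → j < w.length → w.getD i 0 = w.getD j 0 → i = j)
    (hav : ∀ i j, i < j → j + 1 < w.length → w.getD (j+1) 0 < w.getD i 0 →
      w.getD i 0 < w.getD j 0 → ∃ k, i < k ∧ k < j ∧ w.getD k 0 < w.getD (j+1) 0) :
    Cidx w := by
  intro i k hik hk hi1 hasc
  by_contra hcon
  have hklt : w.getD k 0 < w.getD i 0 := by
    rcases lt_trichotomy (w.getD k 0) (w.getD i 0) with h | h | h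
    · exact h
    · exact absurd (hinj k i hk (by omega) h) (by omega)
    · exact absurd h hcon
  have hp : ∃ m, i < m ∧ m < w.length ∧ w.getD m 0 < w.getD i 0 := ⟨k, hik, hk, hklt⟩
  classical
  set k0 := Nat.find hp with hk0def
  obtain ⟨hik0, hk0len, hk0lt⟩ := Nat.find_spec hp
  rw [← hk0def] at hik0 hk0len hk0lt
  have hmin : ∀ m, m < k0 → ¬ (i < m ∧ m < w.length ∧ w.getD m 0 < w.getD i 0) :=
    fun m hm => Nat.find_min hp hm
  have hk0ne : k0 ≠ i + 1 := by
    intro h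
    rw [h] at hk0lt
    omega
  have hik02 : i + 1 < k0 := by omega
  have hmidlen : k0 - 1 < w.length := by omega
  have hmidgt : w.getD i 0 < w.getD (k0-1) 0 := by
    have hnot := hmin (k0-1) (by omega)
    push_neg at hnot
    have hle := hnot (by omega) hmidlen
    have hne : w.getD i 0 ≠ w.getD (k0-1) 0 := by
      intro h
      exact absurd (hinj i (k0-1) (by omega) hmidlen h) (by omega)
    omega
  obtain ⟨m, hm1, hm2, hm3⟩ := hav i (k0-1) (by omega) (by omega)
    (by rw [Nat.sub_add_cancel (by omega)]; exact hk0lt)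
    hmidgt
  rw [Nat.sub_add_cancel (by omega)] at hm3
  exact hmin m (by omega) ⟨hm1, by omega, by omega⟩

theorem barred_of_cidx (w : List ℕ) (hC : Cidx w) :
    ∀ i j, i < j → j + 1 < w.length → w.getD (j+1) 0 < w.getD i 0 →
      w.getD i 0 < w.getD j 0 → ∃ k, i < k ∧ k < j ∧ w.getD k 0 < w.getD (j+1) 0 := by
  intro i j hij hj1 hlo hhi
  obtain ⟨m, hm1, hm2, hm3⟩ := exists_ascent w hij (by omega) hhi
  have hmval : w.getD m 0 < w.getD (j+1) 0 := hC m (j+1) (by omega) hj1 (by omega) hm3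
  rcases Nat.eq_or_lt_of_le hm1 with rfl | him
  · omega
  · exact ⟨m, him, hm2, hmval⟩
section Bridge
variable {n : ℕ}

theorem permWord_length (σ : Equiv.Perm (Fin n)) : (permWord σ).length = n := by
  simp [permWord]

theorem permWord_getD (σ : Equiv.Perm (Fin n)) {i : ℕ} (h : i < n) :
    (permWord σ).getD i 0 = (σ ⟨i, h⟩ : ℕ) + 1 := by
  rw [permWord, List.getD_eq_getElem _ _ (by simpa using h)]
  simp

theorem avoids_iff_cw (σ : Equiv.Perm (Fin n)) :
    AvoidsBarred σ ↔ Cw (List.ofFn σ) := by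
  have hlen : (permWord σ).length = n := permWord_length σ
  have hmap : permWord σ = (List.ofFn σ).map (fun a : Fin n => (a : ℕ) + 1) := by
    rw [List.map_ofFn]; rfl
  have hmono : StrictMono (fun a : Fin n => (a : ℕ) + 1) := fun a b h => by
    simpa using (Fin.lt_iff_val_lt_val.1 h)
  have hinj : ∀ i j, i < (permWord σ).length → j < (permWord σ).length →
      (permWord σ).getD i 0 = (permWord σ).getD j 0 → i = j := by
    intro i j hi hj heq
    rw [hlen] at hi hj
    rw [permWord_getD σ hi, permWord_getD σ hj] at heq
    have : σ ⟨i, hi⟩ = σ ⟨j, hj⟩ := Fin.ext (by omega)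
    have := σ.injective this
    exact congrArg Fin.val this
  constructor
  · intro h
    rw [← cw_map hmono (List.ofFn σ), ← hmap, cw_iff_cidx]
    apply cidx_of_barred _ hinj
    intro i j hij hj1 hlo hhi
    exact h i j hij (by rwa [hlen] at hj1) hlo hhi
  · intro h
    rw [← cw_map hmono (List.ofFn σ), ← hmap, cw_iff_cidx] at h
    intro i j hij hj1 hlo hhi
    exact barred_of_cidx _ h i j hij (by rwa [hlen]) hlo hhi

theorem wordOf_perm_finRange (σ : Equiv.Perm (Fin n)) :
    (List.ofFn σ).Perm (List.finRange n) := by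
  apply List.perm_of_nodup_nodup_toFinset_eq
  · exact List.nodup_ofFn.2 σ.injective
  · exact List.nodup_finRange n
  · rw [List.toFinset_finRange]
    ext x
    simp only [List.mem_toFinset, List.mem_ofFn, Finset.mem_univ, iff_true]
    exact ⟨σ.symm x, σ.apply_symm_apply x⟩

noncomputable def permOfList (w : List (Fin n)) (hnd : w.Nodup) (hlen : w.length = n) :
    Equiv.Perm (Fin n) :=
  Equiv.ofBijective (fun i => w.get (Fin.cast hlen.symm i))
    (Finite.injective_iff_bijective.1 (fun i j h => by
      have h2 := congrArg Fin.val (List.nodup_iff_injective_get.1 hnd h)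
      simp only [Fin.coe_cast] at h2
      exact Fin.ext h2))

theorem ofFn_permOfList (w : List (Fin n)) (hnd : w.Nodup) (hlen : w.length = n) :
    List.ofFn (permOfList w hnd hlen) = w := by
  apply List.ext_get (by simp [hlen])
  intro i h1 h2
  simp only [List.get_ofFn]
  rfl

theorem card_avoids_eq_card_goodL (n : ℕ) :
    Nat.card {σ : Equiv.Perm (Fin n) // AvoidsBarred σ} =
      Nat.card {L : List (List (Fin n)) // Good L ∧ L.flatten.Perm (List.finRange n)} := by
  apply Nat.card_eq_of_bijective
    (fun p => ⟨runs (List.ofFn p.1),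
      good_runs ((avoids_iff_cw p.1).1 p.2) (List.nodup_ofFn.2 p.1.injective),
      by rw [runs_flatten]; exact wordOf_perm_finRange p.1⟩)
  constructor
  · rintro ⟨σ, hσ⟩ ⟨τ, hτ⟩ h
    simp only [Subtype.mk.injEq] at h
    have : List.ofFn σ = List.ofFn τ := by
      rw [← runs_flatten (List.ofFn σ), ← runs_flatten (List.ofFn τ), h]
    exact Subtype.ext (DFunLike.coe_injective (List.ofFn_injective this))
  · rintro ⟨L, hG, hP⟩
    have hnd : L.flatten.Nodup := hP.nodup_iff.2 (List.nodup_finRange n)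
    have hlen : L.flatten.length = n := by
      rw [hP.length_eq, List.length_finRange]
    refine ⟨⟨permOfList L.flatten hnd hlen, ?_⟩, ?_⟩
    · rw [avoids_iff_cw, ofFn_permOfList]
      exact cw_flatten hG
    · apply Subtype.ext
      simp only
      rw [ofFn_permOfList]
      exact good_flatten_inj
        (good_runs (cw_flatten hG) hnd) hG (by rw [runs_flatten])

end Bridge
section PartE2
variable {n : ℕ}
open Finset

/-- two strictly decreasing lists with the same elements are equal -/
theorem desc_inj {r s : List α} (hr : r.Chain' (· > ·)) (hs : s.Chain' (· > ·))
    (h : r.toFinset = s.toFinset) : r = s := by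
  classical
  haveI : IsAntisymm α (· > ·) := ⟨fun a b h1 h2 => (lt_asymm h1 h2).elim⟩
  have hrp : r.Pairwise (· > ·) := isChain_iff_pairwise.1 hr
  have hsp : s.Pairwise (· > ·) := isChain_iff_pairwise.1 hs
  have hrnd : r.Nodup := hrp.imp fun h => ne_of_gt h
  have hsnd : s.Nodup := hsp.imp fun h => ne_of_gt h
  exact Perm.eq_of_pairwise' hrp hsp (perm_of_nodup_nodup_toFinset_eq hrnd hsnd h)

/-- lift a permutation along a map which is injective on the elements involved -/
theorem perm_of_map_perm {γ δ : Type*} [DecidableEq γ] {f : γ → δ} :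
    ∀ {l1 l2 : List γ}, (l1.map f).Perm (l2.map f) →
      (∀ x ∈ l1, ∀ y ∈ l2, f x = f y → x = y) → l1.Perm l2 := by
  intro l1
  induction l1 with
  | nil =>
    intro l2 hp _
    cases l2 with
    | nil => exact Perm.refl _
    | cons b t => exact absurd hp.symm (by simp)
  | cons a t ih =>
    intro l2 hp hinj
    have hfa : f a ∈ l2.map f := hp.subset (by simp)
    obtain ⟨b, hb, hfb⟩ := mem_map.1 hfa
    have hab : a = b := (hinj a (mem_cons_self) b hb hfb.symm).symm ▸ rfl
    have hab' : b = a := (hinj a (mem_cons_self) b hb hfb.symm).symm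
    have hl2 : l2.Perm (a :: l2.erase a) := by
      subst hab
      exact perm_cons_erase hb
    have hmap2 : (l2.map f).Perm (f a :: (l2.erase a).map f) := by
      have := hl2.map f
      simpa using this
    have hpt : (t.map f).Perm ((l2.erase a).map f) :=
      (hp.trans hmap2).cons_inv
    have : t.Perm (l2.erase a) :=
      ih hpt (fun x hx y hy => hinj x (mem_cons_of_mem _ hx) y (List.mem_of_mem_erase hy))
    exact (this.cons a).trans hl2.symm

theorem good_pairwise_min {L : List (List α)} (hG : Good L) :
    L.Pairwise (fun r s => r.minimum < s.minimum) := by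
  refine Pairwise.imp_of_mem ?_ hG.2.2
  intro r s hr hs hrel
  have hsne : s ≠ [] := hG.1 s hs
  obtain ⟨m, hm⟩ : ∃ m : α, s.minimum = (m : WithTop α) := by
    cases hmin : s.minimum with
    | top => exact absurd (minimum_eq_top.1 hmin) hsne
    | coe m => exact ⟨m, rfl⟩
  obtain ⟨x, hx, hxm⟩ := hrel m (minimum_mem hm)
  calc r.minimum ≤ (x : WithTop α) := minimum_le_of_mem' hx
    _ < (m : WithTop α) := by exact_mod_cast hxm
    _ = s.minimum := hm.symm

theorem good_flatten_nodup_pairwise {L : List (List (Fin n))}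
    (hnd : L.flatten.Nodup) : L.Pairwise List.Disjoint :=
  (List.nodup_flatten.1 hnd).2

theorem good_map_toFinset_nodup {L : List (List (Fin n))} (hG : Good L)
    (hnd : L.flatten.Nodup) : (L.map List.toFinset).Nodup := by
  classical
  rw [List.Nodup, List.pairwise_map]
  refine Pairwise.imp_of_mem ?_ (good_flatten_nodup_pairwise hnd)
  intro r s hr hs hdisj heq
  obtain ⟨x, hx⟩ := List.exists_mem_of_ne_nil r (hG.1 r hr)
  have hxs : x ∈ s := by
    have : x ∈ s.toFinset := heq ▸ List.mem_toFinset.2 hx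
    exact List.mem_toFinset.1 this
  exact hdisj hx hxs

def toParts (L : List (List (Fin n))) : Finset (Finset (Fin n)) :=
  (L.map List.toFinset).toFinset

def toP (L : List (List (Fin n))) (hG : Good L)
    (hP : L.flatten.Perm (List.finRange n)) :
    Finpartition (Finset.univ : Finset (Fin n)) where
  parts := toParts L
  supIndep := by
    rw [Finset.supIndep_iff_pairwiseDisjoint]
    intro s hs t ht hst
    simp only [toParts, Finset.mem_coe, List.mem_toFinset, List.mem_map] at hs ht
    obtain ⟨r, hr, rfl⟩ := hs
    obtain ⟨r', hr', rfl⟩ := ht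
    have hdisj : List.Disjoint r r' := by
      have hpw := good_flatten_nodup_pairwise (hP.nodup_iff.2 (List.nodup_finRange n))
      haveI hsym : Std.Symm (List.Disjoint (α := Fin n)) := ⟨fun a b h => h.symm⟩
      exact hpw.forall hr hr' (fun h => hst (by rw [h]))
    simp only [Function.onFun, id]
    refine Finset.disjoint_left.2 (fun {x} hx hx' => ?_)
    exact hdisj (List.mem_toFinset.1 hx) (List.mem_toFinset.1 hx')
  sup_parts := by
    apply _root_.le_antisymm
    · exact Finset.sup_le (fun t _ => le_of_eq_of_le rfl (Finset.subset_univ t))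
    · intro x _
      have hx : x ∈ L.flatten := (hP.mem_iff).2 (List.mem_finRange x)
      obtain ⟨r, hr, hxr⟩ := List.mem_flatten.1 hx
      exact Finset.mem_sup.2 ⟨r.toFinset, List.mem_toFinset.2 (List.mem_map_of_mem hr),
        List.mem_toFinset.2 hxr⟩
  bot_notMem := by
    simp only [Finset.bot_eq_empty, toParts, List.mem_toFinset, List.mem_map]
    rintro ⟨r, hr, hre⟩
    have : r = [] := by
      rw [← List.toFinset_eq_empty_iff]
      exact hre
    exact hG.1 r hr this

theorem good_toParts_inj {L1 L2 : List (List (Fin n))}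
    (hG1 : Good L1) (hP1 : L1.flatten.Perm (List.finRange n))
    (hG2 : Good L2) (hP2 : L2.flatten.Perm (List.finRange n))
    (h : toParts L1 = toParts L2) : L1 = L2 := by
  classical
  have hnd1 : L1.flatten.Nodup := hP1.nodup_iff.2 (List.nodup_finRange n)
  have hnd2 : L2.flatten.Nodup := hP2.nodup_iff.2 (List.nodup_finRange n)
  have hperm : (L1.map List.toFinset).Perm (L2.map List.toFinset) :=
    perm_of_nodup_nodup_toFinset_eq (good_map_toFinset_nodup hG1 hnd1)
      (good_map_toFinset_nodup hG2 hnd2) h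
  have hLp : L1.Perm L2 := by
    refine perm_of_map_perm hperm ?_
    intro x hx y hy hxy
    classical
    refine desc_inj (hG1.2.1 x hx) (hG2.2.1 y hy) ?_
    convert hxy using 2
  haveI : IsAntisymm (List (Fin n)) (fun r s => r.minimum < s.minimum) :=
    ⟨fun a b h1 h2 => (lt_asymm h1 h2).elim⟩
  exact Perm.eq_of_pairwise' (good_pairwise_min hG1) (good_pairwise_min hG2) hLp

/-- the canonical block list of a finpartition -/
noncomputable def partsList (P : Finpartition (Finset.univ : Finset (Fin n))) : List (Finset (Fin n)) :=
  List.insertionSort (fun s t => s.min ≤ t.min) P.parts.toList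

def descList (t : Finset (Fin n)) : List (Fin n) := (t.sort (· ≤ ·)).reverse

noncomputable def ofPList (P : Finpartition (Finset.univ : Finset (Fin n))) : List (List (Fin n)) :=
  (partsList P).map descList

theorem mem_partsList {P : Finpartition (Finset.univ : Finset (Fin n))}
    {t : Finset (Fin n)} : t ∈ partsList P ↔ t ∈ P.parts := by
  rw [partsList, (List.perm_insertionSort _ _).mem_iff, Finset.mem_toList]

theorem mem_descList {t : Finset (Fin n)} {x : Fin n} : x ∈ descList t ↔ x ∈ t := by
  rw [descList, List.mem_reverse, Finset.mem_sort]

theorem descList_chain (t : Finset (Fin n)) : (descList t).Chain' (· > ·) := by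
  apply List.Pairwise.isChain
  rw [descList, List.pairwise_reverse]
  exact (Finset.sortedLT_sort t).pairwise.imp (fun h => h)

theorem descList_ne_nil {t : Finset (Fin n)} (ht : t.Nonempty) : descList t ≠ [] := by
  rw [descList]
  simp only [ne_eq, List.reverse_eq_nil_iff]
  intro h
  have h2 := Finset.length_sort (α := Fin n) (· ≤ ·) (s := t)
  rw [h] at h2
  simp only [List.length_nil] at h2
  have := Finset.card_pos.2 ht
  omega

theorem descList_toFinset (t : Finset (Fin n)) : (descList t).toFinset = t := by
  rw [descList, List.toFinset_reverse, Finset.sort_toFinset]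
theorem partsList_sorted (P : Finpartition (Finset.univ : Finset (Fin n))) :
    (partsList P).Pairwise (fun s t => s.min ≤ t.min) := by
  haveI : IsTotal (Finset (Fin n)) (fun s t => s.min ≤ t.min) := ⟨fun a b => le_total _ _⟩
  haveI : IsTrans (Finset (Fin n)) (fun s t => s.min ≤ t.min) :=
    ⟨fun a b c h1 h2 => le_trans h1 h2⟩
  exact List.pairwise_insertionSort _ _

theorem partsList_nodup (P : Finpartition (Finset.univ : Finset (Fin n))) :
    (partsList P).Nodup :=
  ((List.perm_insertionSort _ _).nodup_iff).2 (Finset.nodup_toList _)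

theorem partsList_strict (P : Finpartition (Finset.univ : Finset (Fin n))) :
    (partsList P).Pairwise (fun s t : Finset (Fin n) => s.min < t.min) := by
  refine Pairwise.imp_of_mem ?_ ((partsList_sorted P).and (partsList_nodup P))
  rintro s t hs ht ⟨hle, hne⟩
  rcases lt_or_eq_of_le hle with h | h
  · exact h
  · exfalso
    have hs' : s ∈ P.parts := mem_partsList.1 hs
    have ht' : t ∈ P.parts := mem_partsList.1 ht
    have hsne : s.Nonempty := P.nonempty_of_mem_parts hs'
    have htne : t.Nonempty := P.nonempty_of_mem_parts ht'
    have hmins : (↑(s.min' hsne) : WithTop (Fin n)) = ↑(t.min' htne) := by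
      rw [Finset.coe_min', Finset.coe_min', h]
    have hminseq : s.min' hsne = t.min' htne := by exact_mod_cast hmins
    have hdisj : Disjoint s t := P.disjoint hs' ht' hne
    exact (Finset.disjoint_left.1 hdisj (Finset.min'_mem s hsne))
      (hminseq ▸ Finset.min'_mem t htne)

theorem good_ofPList (P : Finpartition (Finset.univ : Finset (Fin n))) :
    Good (ofPList P) := by
  refine ⟨?_, ?_, ?_⟩
  · intro r hr
    obtain ⟨t, ht, rfl⟩ := List.mem_map.1 hr
    exact descList_ne_nil (P.nonempty_of_mem_parts (mem_partsList.1 ht))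
  · intro r hr
    obtain ⟨t, ht, rfl⟩ := List.mem_map.1 hr
    exact descList_chain t
  · rw [ofPList, List.pairwise_map]
    refine Pairwise.imp_of_mem ?_ (partsList_strict P)
    intro s t hs ht hlt y hy
    have hsne : s.Nonempty := P.nonempty_of_mem_parts (mem_partsList.1 hs)
    have htne : t.Nonempty := P.nonempty_of_mem_parts (mem_partsList.1 ht)
    refine ⟨s.min' hsne, mem_descList.2 (Finset.min'_mem s hsne), ?_⟩
    have h1 : (↑(s.min' hsne) : WithTop (Fin n)) < ↑(t.min' htne) := by
      rw [Finset.coe_min', Finset.coe_min']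
      exact hlt
    have h2 : s.min' hsne < t.min' htne := by exact_mod_cast h1
    exact lt_of_lt_of_le h2 (Finset.min'_le t y (mem_descList.1 hy))

theorem ofPList_flatten_perm (P : Finpartition (Finset.univ : Finset (Fin n))) :
    (ofPList P).flatten.Perm (List.finRange n) := by
  classical
  apply List.perm_of_nodup_nodup_toFinset_eq
  · rw [List.nodup_flatten]
    constructor
    · intro r hr
      obtain ⟨t, ht, rfl⟩ := List.mem_map.1 hr
      rw [descList, List.nodup_reverse]
      exact Finset.sort_nodup t _
    · rw [ofPList, List.pairwise_map]
      have hnd : (partsList P).Pairwise (· ≠ ·) := partsList_nodup P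
      refine Pairwise.imp_of_mem ?_ hnd
      intro s t hs ht hne x hx hx'
      have hdisj : Disjoint s t :=
        P.disjoint (mem_partsList.1 hs) (mem_partsList.1 ht) hne
      exact (Finset.disjoint_left.1 hdisj (mem_descList.1 hx)) (mem_descList.1 hx')
  · exact List.nodup_finRange n
  · rw [List.toFinset_finRange]
    ext x
    simp only [List.mem_toFinset, Finset.mem_univ, iff_true]
    obtain ⟨t, ht, hxt⟩ := P.exists_mem (Finset.mem_univ x)
    exact List.mem_flatten.2 ⟨descList t, List.mem_map_of_mem (mem_partsList.2 ht),
      mem_descList.2 hxt⟩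

theorem toParts_ofPList (P : Finpartition (Finset.univ : Finset (Fin n))) :
    toParts (ofPList P) = P.parts := by
  classical
  rw [toParts, ofPList, List.map_map]
  have h1 : (partsList P).map (List.toFinset ∘ descList) = (partsList P).map id := by
    apply List.map_congr_left
    intro t _
    exact descList_toFinset t
  rw [h1, List.map_id]
  ext t
  rw [List.mem_toFinset, mem_partsList]

theorem card_goodL_eq_card_finpartition (n : ℕ) :
    Nat.card {L : List (List (Fin n)) // Good L ∧ L.flatten.Perm (List.finRange n)} =
      Nat.card (Finpartition (Finset.univ : Finset (Fin n))) := by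
  apply Nat.card_eq_of_bijective (fun p => toP p.1 p.2.1 p.2.2)
  constructor
  · rintro ⟨L1, hG1, hP1⟩ ⟨L2, hG2, hP2⟩ h
    apply Subtype.ext
    exact good_toParts_inj hG1 hP1 hG2 hP2 (congrArg Finpartition.parts h)
  · intro P
    refine ⟨⟨ofPList P, good_ofPList P, ofPList_flatten_perm P⟩, ?_⟩
    apply Finpartition.ext
    exact toParts_ofPList P

end PartE2
end Stmt15Aux

/-- The number of permutations of `{1,…,n}` avoiding the barred pattern
3-1̄-42 equals the `n`-th Bell number, i.e., the number of set partitions of an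
`n`-element set (here: finpartitions of `Fin n`). -/
theorem stmt15 (n : ℕ) :
    Nat.card {σ : Equiv.Perm (Fin n) // AvoidsBarred σ} =
      Nat.card (Finpartition (Finset.univ : Finset (Fin n))) :=
  (Stmt15Aux.card_avoids_eq_card_goodL n).trans
    (Stmt15Aux.card_goodL_eq_card_finpartition n)
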